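/- There exists a finite strategic game G with a Nash equilibrium s and a contraction G' (one strategy removed from one player) such that every individual improvement path in G' starting from the profile induced by s is infinite. -/
import Mathlib


/-- A profile of a finite strategic game with `N` players whose strategies are
    drawn from `Fin M`, with availability sets `A`. -/
abbrev Profile (N M : ℕ) := Fin N → Fin M

/-- `σ` is a Nash equilibrium: every player uses an available strategy and no
    unilateral deviation to an available strategy strictly increases the
    deviator's payoff. -/
def IsNash {N M : ℕ} (pay : Profile N M → Fin N → ℝ) (A : Fin N → Finset (Fin M))
    (σ : Profile N M) : Prop :=
  (∀ i, σ i ∈ A i) ∧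
  ∀ i, ∀ t ∈ A i, pay (Function.update σ i t) i ≤ pay σ i

/-- `σ'` is obtained from `σ` by an individual improvement: one player switches
    to an available strategy, either because their current strategy is no longer
    available or because the switch strictly increases their payoff. -/
def Imp {N M : ℕ} (pay : Profile N M → Fin N → ℝ) (A : Fin N → Finset (Fin M))
    (σ σ' : Profile N M) : Prop :=
  ∃ i, ∃ t ∈ A i, σ' = Function.update σ i t ∧
    (σ i ∉ A i ∨ (t ≠ σ i ∧ pay σ' i > pay σ i))

def myPay : Profile 2 3 → Fin 2 → ℝ := fun σ i =>
  if σ 0 = 2 then 2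
  else if i = 0 then (if σ 0 = σ 1 then 1 else 0)
  else (if σ 0 = σ 1 then 0 else 1)

def myA : Fin 2 → Finset (Fin 3) := ![{0,1,2}, {0,1}]

/-- There exists a finite strategic game `G` with a Nash equilibrium `s` and a
    contraction `G'` (strategy `x` removed from player `j`) such that every
    individual improvement path in `G'` starting from `s` is infinite, i.e.
    every finite improvement path from `s` can be extended: an unsafe game. -/
theorem unsafe_game_exists :
    ∃ (N M : ℕ) (pay : Profile N M → Fin N → ℝ) (A : Fin N → Finset (Fin M))
      (j : Fin N) (x : Fin M), x ∈ A j ∧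
      ∃ s : Profile N M,
        IsNash pay A s ∧
        (let A' := Function.update A j ((A j).erase x)
        ∀ (m : ℕ) (f : Fin (m + 1) → Profile N M),
          f 0 = s →
          (∀ k : Fin m, Imp pay A' (f k.castSucc) (f k.succ)) →
          ∃ σ', Imp pay A' (f (Fin.last m)) σ') := by
  refine ⟨2, 3, myPay, myA, 0, 2, by decide, ![2, 0], ⟨?_, ?_⟩, ?_⟩
  · intro i; fin_cases i <;> decide
  · intro i t ht
    fin_cases i
    · simp only [myPay, Function.update]
      norm_num
      split <;> norm_num
      split <;> norm_num
    · simp only [myPay, Function.update]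
      norm_num
  · intro A' m f _ _
    set σ := f (Fin.last m)
    clear_value σ
    have key : ∀ τ : Profile 2 3, ∃ τ', Imp myPay A' τ τ' := by
      intro τ
      have h0 : τ 0 = 0 ∨ τ 0 = 1 ∨ τ 0 = 2 := by omega
      have h1 : τ 1 = 0 ∨ τ 1 = 1 ∨ τ 1 = 2 := by omega
      have hA'0 : A' 0 = ({0,1,2} : Finset (Fin 3)).erase 2 := by
        simp [A', myA]
      have hA'1 : A' 1 = ({0,1} : Finset (Fin 3)) := by
        simp [A', Function.update, myA]
      rcases h0 with h0 | h0 | h0 <;> rcases h1 with h1 | h1 | h1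
      -- (0,0): player 1 moves to 1
      · exact ⟨_, 1, 1, by rw [hA'1]; decide, rfl,
          Or.inr ⟨by rw [h1]; decide, by simp [myPay, Function.update, h0, h1]⟩⟩
      -- (0,1): player 0 moves to 1
      · exact ⟨_, 0, 1, by rw [hA'0]; decide, rfl,
          Or.inr ⟨by rw [h0]; decide, by simp [myPay, Function.update, h0, h1]⟩⟩
      -- (0,2): player 1's strategy unavailable
      · exact ⟨_, 1, 0, by rw [hA'1]; decide, rfl,
          Or.inl (by rw [hA'1, h1]; decide)⟩
      -- (1,0): player 0 moves to 0
      · exact ⟨_, 0, 0, by rw [hA'0]; decide, rfl,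
          Or.inr ⟨by rw [h0]; decide, by simp [myPay, Function.update, h0, h1]⟩⟩
      -- (1,1): player 1 moves to 0
      · exact ⟨_, 1, 0, by rw [hA'1]; decide, rfl,
          Or.inr ⟨by rw [h1]; decide, by simp [myPay, Function.update, h0, h1]⟩⟩
      -- (1,2): player 1 unavailable
      · exact ⟨_, 1, 0, by rw [hA'1]; decide, rfl,
          Or.inl (by rw [hA'1, h1]; decide)⟩
      -- (2,*): player 0 unavailable
      · exact ⟨_, 0, 0, by rw [hA'0]; decide, rfl,
          Or.inl (by rw [hA'0, h0]; decide)⟩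
      · exact ⟨_, 0, 0, by rw [hA'0]; decide, rfl,
          Or.inl (by rw [hA'0, h0]; decide)⟩
      · exact ⟨_, 0, 0, by rw [hA'0]; decide, rfl,
          Or.inl (by rw [hA'0, h0]; decide)⟩
    exact key σ
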